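/- Let m ≥ 1 and k ≥ 4 be integers and let q ∈ (1,2) satisfy |q − q_k| < q_k^{−(m+2)k−3}. For 0 ≤ i ≤ m define L_i(q) = g_{q,k}^i(1) and R_i(q) = g_{q,k}^i(1 + q^{−(m−i)k} π_q(0^{k−3}(01^{k−1})^∞)), and define L_Q(q) = g_{q,k}^m(π_q(1^{k−3}(10^{k−1})^∞)) and R_Q(q) = g_{q,k}^m(1/(q−1)). Then: (a) if q < q_k, then L_Q(q) < L_0(q) < ⋯ < L_m(q) < R_Q(q) < R_0(q) < ⋯ < R_m(q); (b) if q = q_k, then L_Q(q) < L_0(q) = ⋯ = L_m(q) < R_Q(q) < R_0(q) = ⋯ = R_m(q); (c) if q > q_k, then L_Q(q) < L_m(q) < ⋯ < L_0(q) < R_Q(q) < R_m(q) < ⋯ < R_0(q). -/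

import Mathlib

open Set

/-- Projection map: the value of the (0-indexed) digit sequence `a` in base `q`,
`π_q(a) = Σ_{j=0}^∞ a_j q^{-(j+1)}`. -/
noncomputable def piQ (q : ℝ) (a : ℕ → ℝ) : ℝ := ∑' j : ℕ, a j / q ^ (j + 1)

/-- `a` is a sequence of digits in `{0,1}`. -/
def IsDigitSeq (a : ℕ → ℝ) : Prop := ∀ j, a j = 0 ∨ a j = 1

/-- `a` is a sequence of digits in `{-1,0,1}`. -/
def IsExtDigitSeq (a : ℕ → ℝ) : Prop := ∀ j, a j = -1 ∨ a j = 0 ∨ a j = 1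

/-- The set of base-`q` expansions of `x`. -/
def SigmaSet (q x : ℝ) : Set (ℕ → ℝ) := {a | IsDigitSeq a ∧ piQ q a = x}

/-- The interval `I_q = [0, 1/(q-1)]`. -/
def Iq (q : ℝ) : Set ℝ := Set.Icc 0 (1 / (q - 1))

/-- The switch region `J_q = [1/q, 1/(q(q-1))]`. -/
def Jq (q : ℝ) : Set ℝ := Set.Icc (1 / q) (1 / (q * (q - 1)))

/-- The set of points of `I_q` having exactly `m` base-`q` expansions. -/
def UqM (q : ℝ) (m : ℕ∞) : Set ℝ := {x | x ∈ Iq q ∧ (SigmaSet q x).encard = m}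

/-- The set of points of `I_q` having a unique base-`q` expansion. -/
def Uq (q : ℝ) : Set ℝ := UqM q 1

/-- `B_m`: the set of bases `q ∈ (1,2)` for which some point has exactly `m` expansions. -/
def Bset (m : ℕ∞) : Set ℝ := {q | q ∈ Set.Ioo (1 : ℝ) 2 ∧ (UqM q m).Nonempty}

/-- `x` is the `k`-Bonacci number: the root in `(1,2)` of `x^k = x^{k-1} + ⋯ + x + 1`. -/
def IsBonacci (k : ℕ) (x : ℝ) : Prop :=
  x ∈ Set.Ioo (1 : ℝ) 2 ∧ x ^ k = ∑ i ∈ Finset.range k, x ^ i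

/-- `a` contains no occurrence of the word `01^k` as a consecutive block. -/
def AvoidsWord01 (k : ℕ) (a : ℕ → ℝ) : Prop :=
  ∀ i, ¬(a i = 0 ∧ ∀ j, 1 ≤ j → j ≤ k → a (i + j) = 1)

/-- `a` contains no occurrence of the word `10^k` as a consecutive block. -/
def AvoidsWord10 (k : ℕ) (a : ℕ → ℝ) : Prop :=
  ∀ i, ¬(a i = 1 ∧ ∀ j, 1 ≤ j → j ≤ k → a (i + j) = 0)

/-- `S_k`: the set of `{0,1}`-sequences avoiding the words `01^k` and `10^k`. -/
def Sset (k : ℕ) : Set (ℕ → ℝ) := {a | IsDigitSeq a ∧ AvoidsWord01 k a ∧ AvoidsWord10 k a}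

/-- `g_{q,k} = f_1^{-(k-1)} ∘ f_0^{-1}`, where `f_0^{-1}(y) = y/q` and `f_1^{-1}(y) = (y+1)/q`. -/
noncomputable def gMap (q : ℝ) (k : ℕ) (x : ℝ) : ℝ := (fun y => (y + 1) / q)^[k - 1] (x / q)

/-- The maps `f_0(x) = qx` (for `b = false`) and `f_1(x) = qx - 1` (for `b = true`). -/
noncomputable def fDigit (q : ℝ) (b : Bool) (x : ℝ) : ℝ := if b then q * x - 1 else q * x

/-- `(a, b)` is a bounded gap of `C`: a bounded connected component of `ℝ \ C`. -/
def IsGap (C : Set ℝ) (a b : ℝ) : Prop :=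
  a < b ∧ a ∈ C ∧ b ∈ C ∧ Set.Ioo a b ∩ C = ∅

/-- The left endpoint of the bridge of `C` lying immediately to the left of the gap `(a, b)`:
the right endpoint of the nearest gap to the left having diameter at least `b - a`
(or `min C` if there is no such gap). -/
noncomputable def leftBridgeStart (C : Set ℝ) (a b : ℝ) : ℝ :=
  sSup ({sInf C} ∪ {d | ∃ c, IsGap C c d ∧ d ≤ a ∧ b - a ≤ d - c})

/-- The right endpoint of the bridge of `C` lying immediately to the right of the gap `(a, b)`. -/
noncomputable def rightBridgeEnd (C : Set ℝ) (a b : ℝ) : ℝ :=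
  sInf ({sSup C} ∪ {c | ∃ d, IsGap C c d ∧ b ≤ c ∧ b - a ≤ d - c})

/-- The (Newhouse) thickness of a compact set `C ⊆ ℝ`: the infimum over all bounded gaps `G`
of the ratio of the length of the bridge on either side of `G` to the length of `G`
(`∞` if `C` has no bounded gap). -/
noncomputable def thickness (C : Set ℝ) : ENNReal :=
  ⨅ p : {p : ℝ × ℝ // IsGap C p.1 p.2},
    ENNReal.ofReal
      (min ((p.1.1 - leftBridgeStart C p.1.1 p.1.2) / (p.1.2 - p.1.1))
        ((rightBridgeEnd C p.1.1 p.1.2 - p.1.2) / (p.1.2 - p.1.1)))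

/-- `B` is contained in a gap of `A`, i.e. in a connected component of `ℝ \ A`. -/
def ContainedInGap (B A : Set ℝ) : Prop :=
  ∃ x ∈ Aᶜ, B ⊆ connectedComponentIn Aᶜ x

/-- Two sets are interleaved if neither is contained in a gap of the other. -/
def Interleaved (A B : Set ℝ) : Prop :=
  ¬ContainedInGap B A ∧ ¬ContainedInGap A B

/-- `A` and `B` are `ε`-strongly interleaved: any compact sets within Hausdorff distance `ε`
of `A` and `B` respectively are interleaved. -/
def StronglyInterleaved (ε : ℝ) (A B : Set ℝ) : Prop :=
  ∀ A' B' : Set ℝ, IsCompact A' → IsCompact B' →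
    EMetric.hausdorffEdist A A' ≤ ENNReal.ofReal ε →
    EMetric.hausdorffEdist B B' ≤ ENNReal.ofReal ε → Interleaved A' B'

/-- The sequence `0^{k-3}(01^{k-1})^∞` (0-indexed). -/
noncomputable def seqG (k : ℕ) : ℕ → ℝ := fun j =>
  if j < k - 3 then 0 else if (j - (k - 3)) % k = 0 then 0 else 1

/-- The sequence `1^{k-3}(10^{k-1})^∞` (0-indexed). -/
noncomputable def seqH (k : ℕ) : ℕ → ℝ := fun j =>
  if j < k - 3 then 1 else if (j - (k - 3)) % k = 0 then 1 else 0

/-- The sequence `(1^{k-1}0)^∞` (0-indexed). -/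
noncomputable def seqP (k : ℕ) : ℕ → ℝ := fun j => if j % k = k - 1 then 0 else 1


lemma aux1000 : ∀ n : ℕ, 15 ≤ n → 1000 * (n : ℝ) ≤ 1.9 ^ n := by
  intro n hn
  induction n with
  | zero => omega
  | succ p ih =>
    rcases Nat.lt_or_ge p 15 with h | h
    · have hp : p = 14 := by omega
      subst hp; norm_num
    · have h1 := ih h
      have h2 : (0:ℝ) < 1.9 ^ p := by positivity
      have h3 : (15:ℝ) ≤ (p:ℝ) := by exact_mod_cast h
      push_cast
      calc 1000 * ((p:ℝ) + 1) ≤ 1.9 * (1000 * p) := by nlinarith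
        _ ≤ 1.9 * 1.9 ^ p := by nlinarith
        _ = 1.9 ^ (p+1) := by rw [pow_succ]; ring

lemma auxk2k : ∀ n : ℕ, 4 ≤ n → (n:ℝ) * 2 ^ n ≤ 3.4 ^ n := by
  intro n hn
  induction n with
  | zero => omega
  | succ p ih =>
    rcases Nat.lt_or_ge p 4 with h | h
    · have hp : p = 3 := by omega
      subst hp; norm_num
    · have h2 : (0:ℝ) < 2 ^ p := by positivity
      have h3 : (4:ℝ) ≤ (p:ℝ) := by exact_mod_cast h
      push_cast
      calc ((p:ℝ) + 1) * 2 ^ (p+1) = 2 * ((p:ℝ)+1)/(p:ℝ) * ((p:ℝ) * 2^p) := by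
            field_simp; ring
        _ ≤ 3.4 ^ (p+1) := by
            rw [pow_succ]
            have h4 : 2 * ((p:ℝ)+1)/(p:ℝ) ≤ 3.4 := by
              rw [div_le_iff₀ (by linarith)]; nlinarith
            have h5 : (0:ℝ) < (p:ℝ) * 2^p := by positivity
            nlinarith [ih h]

lemma conv_aux (x y d : ℝ) (n : ℕ) (hx : 1.8 ≤ x) (hd0 : 0 ≤ d) (hd : d ≤ 0.001)
    (hxy : x - d ≤ y) (hnd : (n:ℝ) * d ≤ 0.001) : 0.99 * x ^ n ≤ y ^ n := by
  have hx0 : (0:ℝ) < x := by linarith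
  have hdx : d / x ≤ d := by
    apply div_le_self hd0; linarith
  have h2 : (1:ℝ) + (n:ℝ) * (-(d/x)) ≤ (1 + (-(d/x)))^n := by
    apply one_add_mul_le_pow
    have : d / x ≤ 1 := by linarith
    linarith
  have hnd' : (n:ℝ) * (d/x) ≤ 0.001 := by
    calc (n:ℝ) * (d/x) ≤ (n:ℝ) * d := by
          apply mul_le_mul_of_nonneg_left hdx (Nat.cast_nonneg n)
      _ ≤ 0.001 := hnd
  have h3 : (0.99:ℝ) ≤ (1 - d/x)^n := by
    calc (0.99:ℝ) ≤ 1 + (n:ℝ) * (-(d/x)) := by nlinarith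
      _ ≤ (1 + (-(d/x)))^n := h2
      _ = (1 - d/x)^n := by ring_nf
  have h4 : x * (1 - d/x) = x - d := by field_simp
  have h5 : (0:ℝ) ≤ x - d := by linarith
  calc 0.99 * x^n ≤ (1 - d/x)^n * x^n := by
        apply mul_le_mul_of_nonneg_right h3 (by positivity)
    _ = (x - d)^n := by rw [← mul_pow, mul_comm, h4]
    _ ≤ y^n := pow_le_pow_left₀ h5 hxy n

lemma presum (q : ℝ) (n : ℕ) :
    (∑ i ∈ Finset.range n, (q⁻¹)^(i+1)) * (1 - q⁻¹) = q⁻¹ - (q⁻¹)^(n+1) := by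
  induction n with
  | zero => simp
  | succ p ih =>
    rw [Finset.sum_range_succ]
    linear_combination ih

lemma inv_le_helper (a b : ℝ) (ha : 0 < a) (h : 0.99 * a ≤ b) : b⁻¹ ≤ 1.02 * a⁻¹ := by
  have hb : 0 < b := by nlinarith
  have h1 : b⁻¹ ≤ (0.99*a)⁻¹ := by
    apply inv_anti₀ (by nlinarith) h
  have h2 : (0.99*a)⁻¹ = 0.99⁻¹ * a⁻¹ := by rw [mul_inv]
  have h4 : 0 < a⁻¹ := inv_pos.2 ha
  nlinarith [h1, h2]

lemma iter_affine (q : ℝ) (hq : q ≠ 0) : ∀ (j : ℕ) (y : ℝ),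
    (fun y => (y+1)/q)^[j] y = y * (q⁻¹)^j + ∑ i ∈ Finset.range j, (q⁻¹)^(i+1) := by
  intro j
  induction j with
  | zero => intro y; simp
  | succ p ih =>
    intro y
    rw [Function.iterate_succ_apply', ih y, Finset.sum_range_succ']
    have : ∑ i ∈ Finset.range p, (q⁻¹)^(i+1+1) = q⁻¹ * ∑ i ∈ Finset.range p, (q⁻¹)^(i+1) := by
      rw [Finset.mul_sum]
      apply Finset.sum_congr rfl
      intro i _; ring
    rw [this]
    ring

lemma gMap_eq (q : ℝ) (hq : q ≠ 0) (k : ℕ) (hk : 1 ≤ k) (x : ℝ) :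
    gMap q k x = x * (q⁻¹)^k + ∑ i ∈ Finset.range (k-1), (q⁻¹)^(i+1) := by
  unfold gMap
  rw [iter_affine q hq (k-1) (x/q)]
  congr 1
  rw [div_eq_mul_inv, mul_assoc, ← pow_succ']
  congr 2
  omega

lemma gMap_iter (q : ℝ) (hq : q ≠ 0) (k : ℕ) (hk : 1 ≤ k) :
    ∀ (i : ℕ) (x : ℝ), (gMap q k)^[i] x
      = x * ((q⁻¹)^k)^i
        + (∑ i ∈ Finset.range (k-1), (q⁻¹)^(i+1)) * ∑ j ∈ Finset.range i, ((q⁻¹)^k)^j := by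
  intro i
  induction i with
  | zero => intro x; simp
  | succ p ih =>
    intro x
    rw [Function.iterate_succ_apply, ih, gMap_eq q hq k hk, Finset.sum_range_succ]
    ring

set_option maxHeartbeats 4000000 in
theorem layout_of_endpoints
    (m k : ℕ) (hm : 1 ≤ m) (hk : 4 ≤ k) (qk : ℝ) (hqk : IsBonacci k qk)
    (q : ℝ) (hq : q ∈ Set.Ioo (1 : ℝ) 2)
    (hclose : |q - qk| < qk ^ (-(((m : ℤ) + 2) * (k : ℤ)) - 3))
    (L R : ℕ → ℝ) (LQ RQ : ℝ)
    (hL : ∀ i, L i = (gMap q k)^[i] 1)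
    (hR : ∀ i, R i =
      (gMap q k)^[i] (1 + q ^ (-(((m : ℤ) - (i : ℤ)) * (k : ℤ))) * piQ q (seqG k)))
    (hLQ : LQ = (gMap q k)^[m] (piQ q (seqH k)))
    (hRQ : RQ = (gMap q k)^[m] (1 / (q - 1))) :
    (q < qk →
      LQ < L 0 ∧ (∀ i < m, L i < L (i + 1)) ∧ L m < RQ ∧ RQ < R 0 ∧
        ∀ i < m, R i < R (i + 1)) ∧
    (q = qk →
      LQ < L 0 ∧ (∀ i < m, L i = L (i + 1)) ∧ L m < RQ ∧ RQ < R 0 ∧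
        ∀ i < m, R i = R (i + 1)) ∧
    (qk < q →
      LQ < L m ∧ (∀ i < m, L (i + 1) < L i) ∧ L 0 < RQ ∧ RQ < R m ∧
        ∀ i < m, R (i + 1) < R i) := by
  obtain ⟨hq1, hq2⟩ := hq
  obtain ⟨⟨hqk1, hqk2⟩, hbon⟩ := hqk
  have hqpos : (0:ℝ) < q := by linarith only [hq1]
  have hq0 : q ≠ 0 := ne_of_gt hqpos
  have hqkpos : (0:ℝ) < qk := by linarith
  -- Bonacci consequences
  have hB1 : qk ^ k * (2 - qk) = 1 := by
    have hg := geom_sum_mul qk k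
    linear_combination (-1 : ℝ) * hg + (1 - qk) * hbon
  have hqk19 : 1.9 < qk := by
    by_contra hcon
    push_neg at hcon
    have h4 : qk^4 ≤ qk^k := pow_le_pow_right₀ (le_of_lt hqk1) hk
    have h2qk : (0:ℝ) < 2 - qk := by linarith
    have hle : qk^4 * (2 - qk) ≤ 1 := by nlinarith only [h4, h2qk, hB1]
    have hp2 : (0:ℝ) < qk^2 := by positivity
    nlinarith only [hle, hcon, hqk1, hqk2,
      mul_pos (mul_pos hp2 hqkpos) (sub_pos.2 hqk1), mul_pos hp2 (sub_pos.2 hqk1),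
      mul_pos hqkpos (sub_pos.2 hqk1), sub_pos.2 hqk1,
      mul_nonneg (mul_nonneg hp2.le hqkpos.le) (sub_nonneg.2 hcon),
      mul_nonneg (mul_nonneg hp2.le (sub_nonneg.2 hcon)) (sub_nonneg.2 hqk1.le),
      mul_nonneg (mul_nonneg hqkpos.le (sub_nonneg.2 hcon)) (sub_nonneg.2 hqk1.le),
      mul_nonneg (sub_nonneg.2 hcon) (sub_nonneg.2 hqk1.le)]
  have h2qk : (qk ^ k)⁻¹ = 2 - qk := inv_eq_of_mul_eq_one_right hB1
  -- the closeness bound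
  have hn015 : 15 ≤ (m+2)*k+3 := by
    have := Nat.mul_le_mul (show 3 ≤ m+2 by omega) hk
    omega
  have hδeq : qk ^ (-(((m : ℤ) + 2) * (k : ℤ)) - 3) = ((qk^((m+2)*k+3))⁻¹ : ℝ) := by
    have h1 : (-(((m : ℤ) + 2) * (k : ℤ)) - 3) = -((((m+2)*k+3 : ℕ)):ℤ) := by push_cast; ring
    rw [h1, zpow_neg, zpow_natCast]
  rw [hδeq] at hclose
  have hd0 : (0:ℝ) < (qk^((m+2)*k+3))⁻¹ := by positivity
  have hdn : 1000 * (((m+2)*k+3 : ℕ):ℝ) ≤ qk^((m+2)*k+3) := by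
    calc 1000 * (((m+2)*k+3 : ℕ):ℝ) ≤ 1.9 ^ ((m+2)*k+3) := aux1000 _ hn015
      _ ≤ qk ^ ((m+2)*k+3) := pow_le_pow_left₀ (by norm_num) hqk19.le _
  have hnd : (((m+2)*k+3 : ℕ):ℝ) * (qk^((m+2)*k+3))⁻¹ ≤ 0.001 := by
    have h1 : (((m+2)*k+3 : ℕ):ℝ) ≤ 0.001 * qk^((m+2)*k+3) := by linarith
    calc (((m+2)*k+3 : ℕ):ℝ) * (qk^((m+2)*k+3))⁻¹
        ≤ 0.001 * qk^((m+2)*k+3) * (qk^((m+2)*k+3))⁻¹ :=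
          mul_le_mul_of_nonneg_right h1 hd0.le
      _ = 0.001 := by
          rw [mul_assoc, mul_inv_cancel₀ (by positivity)]; ring
  have hd001 : (qk^((m+2)*k+3))⁻¹ ≤ 0.001 := by
    have h15 : (15:ℝ) ≤ (((m+2)*k+3 : ℕ):ℝ) := by exact_mod_cast hn015
    nlinarith only [hd0, hnd, h15]
  have habs := abs_lt.1 hclose
  have hq18 : 1.8 ≤ q := by linarith [habs.1]
  -- conversion lemmas
  have hconv : ∀ n : ℕ, n ≤ (m+2)*k+3 →
      0.99 * q^n ≤ qk^n ∧ 0.99 * qk^n ≤ q^n := by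
    intro n hn
    have hnc : (n:ℝ) ≤ (((m+2)*k+3 : ℕ):ℝ) := by exact_mod_cast hn
    have hnd2 : (n:ℝ) * (qk^((m+2)*k+3))⁻¹ ≤ 0.001 :=
      le_trans (mul_le_mul_of_nonneg_right hnc hd0.le) hnd
    constructor
    · exact conv_aux q qk _ n hq18 hd0.le hd001 (by linarith [habs.2]) hnd2
    · exact conv_aux qk q _ n (by linarith) hd0.le hd001 (by linarith [habs.1]) hnd2
  -- basic bounds on t = q⁻¹
  have ht0 : (0:ℝ) < q⁻¹ := inv_pos.2 hqpos
  have htlt1 : q⁻¹ < 1 := by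
    rw [inv_lt_one_iff₀]; right; linarith
  have ht56 : q⁻¹ ≤ 0.56 := by
    have h1 : (1.8:ℝ)⁻¹ ≤ 0.56 := by norm_num
    have h2 : q⁻¹ ≤ (1.8:ℝ)⁻¹ := inv_anti₀ (by norm_num) hq18
    linarith
  have ht05 : 0.5 ≤ q⁻¹ := by
    have h2 : (2:ℝ)⁻¹ ≤ q⁻¹ := inv_anti₀ hqpos hq2.le
    norm_num at h2; linarith
  have hS0 : (0:ℝ) < (q⁻¹)^k := by positivity
  have hS01 : (q⁻¹)^k ≤ 0.1 := by
    calc (q⁻¹)^k ≤ (q⁻¹)^4 := pow_le_pow_of_le_one ht0.le htlt1.le hk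
      _ ≤ 0.56^4 := pow_le_pow_left₀ ht0.le ht56 4
      _ ≤ 0.1 := by norm_num
  have hu0 : (0:ℝ) < (q⁻¹)^(k-1) := by positivity
  have hu18 : (q⁻¹)^(k-1) ≤ 0.18 := by
    calc (q⁻¹)^(k-1) ≤ (q⁻¹)^3 := pow_le_pow_of_le_one ht0.le htlt1.le (by omega)
      _ ≤ 0.56^3 := pow_le_pow_left₀ ht0.le ht56 3
      _ ≤ 0.18 := by norm_num
  have htk : (q⁻¹)^k = (q⁻¹)^(k-1) * q⁻¹ := by
    rw [← pow_succ]; congr 1; omega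
  have h2k2 : (q⁻¹)^(2*k-2) = ((q⁻¹)^(k-1))^2 := by
    rw [← pow_mul]; congr 1; omega
  have hSinv : (q⁻¹)^k = (q^k)⁻¹ := inv_pow q k
  have htq : q * q⁻¹ = 1 := mul_inv_cancel₀ hq0
  -- c and e
  have hc : (∑ i ∈ Finset.range (k-1), (q⁻¹)^(i+1)) * (1 - q⁻¹) = q⁻¹ - (q⁻¹)^k := by
    have h1 := presum q (k-1)
    rw [show k-1+1 = k by omega] at h1
    exact h1
  have he : (((∑ i ∈ Finset.range (k-1), (q⁻¹)^(i+1)) + (q⁻¹)^k - 1)) * (q - 1)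
      = 2 - q - (q⁻¹)^k := by
    linear_combination q * hc + ((∑ i ∈ Finset.range (k-1), (q⁻¹)^(i+1)) + 1) * htq
  -- quantitative bound |inv diff| ≤ |q - qk|/2
  have hE2 : |(qk^k)⁻¹ - (q^k)⁻¹| ≤ |q - qk| / 2 := by
    have hgs := geom_sum₂_mul q qk k
    have hSb : ∑ i ∈ Finset.range k, q^i * qk^(k-1-i) ≤ (k:ℝ) * 2^(k-1) := by
      have h1 : ∀ i ∈ Finset.range k, q^i * qk^(k-1-i) ≤ 2^(k-1) := by
        intro i hi
        have hik : i ≤ k - 1 := by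
          have := Finset.mem_range.1 hi; omega
        have e1 : q^i ≤ 2^i := pow_le_pow_left₀ hqpos.le hq2.le i
        have e2 : qk^(k-1-i) ≤ 2^(k-1-i) := pow_le_pow_left₀ hqkpos.le hqk2.le _
        calc q^i * qk^(k-1-i) ≤ 2^i * 2^(k-1-i) := by
              apply mul_le_mul e1 e2 (by positivity) (by positivity)
          _ = 2^(k-1) := by rw [← pow_add]; congr 1; omega
      calc ∑ i ∈ Finset.range k, q^i * qk^(k-1-i)
          ≤ ∑ _i ∈ Finset.range k, (2:ℝ)^(k-1) := Finset.sum_le_sum h1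
        _ = (k:ℝ) * 2^(k-1) := by
            rw [Finset.sum_const, Finset.card_range, nsmul_eq_mul]
    have hSnn : (0:ℝ) ≤ ∑ i ∈ Finset.range k, q^i * qk^(k-1-i) :=
      Finset.sum_nonneg (fun i _ => by positivity)
    have habs1 : |q^k - qk^k| ≤ (k:ℝ) * 2^(k-1) * |q - qk| := by
      rw [← hgs, abs_mul]
      apply mul_le_mul_of_nonneg_right _ (abs_nonneg _)
      rw [abs_of_nonneg hSnn]; exact hSb
    have h34 : (3.4:ℝ)^k ≤ q^k * qk^k := by
      rw [← mul_pow]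
      apply pow_le_pow_left₀ (by norm_num)
      nlinarith only [hq18, hqk19]
    have hk2 : (k:ℝ) * 2^(k-1) ≤ 3.4^k / 2 := by
      have h1 := auxk2k k hk
      have h2 : (2:ℝ)^k = 2 * 2^(k-1) := by
        rw [← pow_succ']; congr 1; omega
      nlinarith only [h1, h2, Nat.cast_nonneg (α := ℝ) k,
        pow_pos (show (0:ℝ) < 2 by norm_num) (k-1)]
    have heq1 : (qk^k)⁻¹ - (q^k)⁻¹ = (q^k - qk^k) / (q^k * qk^k) := by
      field_simp
    rw [heq1, abs_div]
    have hden : (0:ℝ) < q^k * qk^k := by positivity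
    rw [abs_of_pos hden]
    rw [div_le_div_iff₀ hden (by norm_num)]
    have h340 : (0:ℝ) < (3.4:ℝ)^k := by positivity
    have hqabs : (0:ℝ) ≤ |q - qk| := abs_nonneg _
    calc |q^k - qk^k| * 2 ≤ ((k:ℝ) * 2^(k-1) * |q - qk|) * 2 := by linarith
      _ ≤ (3.4^k/2 * |q - qk|) * 2 := by nlinarith only [hk2, hqabs]
      _ = |q - qk| * 3.4^k := by ring
      _ ≤ |q - qk| * (q^k * qk^k) := by nlinarith only [h34, hqabs]
  -- E difference identity
  have hEdiff : (2 - q - (q⁻¹)^k) - (qk - q) = (qk^k)⁻¹ - (q^k)⁻¹ := by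
    rw [hSinv, h2qk]; ring
  -- |e| ≤ 2d
  have heabs : |(∑ i ∈ Finset.range (k-1), (q⁻¹)^(i+1)) + (q⁻¹)^k - 1|
      ≤ 2 * (qk^((m+2)*k+3))⁻¹ := by
    have h1 : |2 - q - (q⁻¹)^k| ≤ 1.5 * (qk^((m+2)*k+3))⁻¹ := by
      have h2 : 2 - q - (q⁻¹)^k = (qk - q) + ((qk^k)⁻¹ - (q^k)⁻¹) := by linarith [hEdiff]
      rw [h2]
      calc |(qk - q) + ((qk^k)⁻¹ - (q^k)⁻¹)| ≤ |qk - q| + |(qk^k)⁻¹ - (q^k)⁻¹| := abs_add_le _ _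
        _ ≤ |q - qk| + |q - qk|/2 := by rw [abs_sub_comm qk q]; linarith [hE2]
        _ ≤ 1.5 * (qk^((m+2)*k+3))⁻¹ := by linarith [hclose]
    have h3 : |(∑ i ∈ Finset.range (k-1), (q⁻¹)^(i+1)) + (q⁻¹)^k - 1| * (q-1)
        = |2 - q - (q⁻¹)^k| := by
      rw [← he, abs_mul, abs_of_pos (by linarith : (0:ℝ) < q - 1)]
    nlinarith only [abs_nonneg ((∑ i ∈ Finset.range (k-1), (q⁻¹)^(i+1)) + (q⁻¹)^k - 1),
      hd0, h1, h3, hq18]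
  -- M1
  have hk7 : (89:ℝ) ≤ qk^(k+3) := by
    calc (89:ℝ) ≤ 1.9^7 := by norm_num
      _ ≤ 1.9^(k+3) := pow_le_pow_right₀ (by norm_num) (by omega)
      _ ≤ qk^(k+3) := pow_le_pow_left₀ (by norm_num) hqk19.le _
  have hplus : k*(m+1) + (k+3) = (m+2)*k+3 := by ring
  have hAle : k*(m+1) ≤ (m+2)*k+3 := by omega
  have hpow1 : qk^(k*(m+1)) * qk^(k+3) * (qk^((m+2)*k+3))⁻¹ = 1 := by
    rw [← pow_add, hplus]; exact mul_inv_cancel₀ (by positivity)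
  have hc1 := (hconv (k*(m+1)) hAle).1
  have hqA0 : (0:ℝ) < q^(k*(m+1)) := by positivity
  have hqkA0 : (0:ℝ) < qk^(k*(m+1)) := by positivity
  have h3 : (qk^((m+2)*k+3))⁻¹ * qk^(k*(m+1)) ≤ 1/89 := by
    nlinarith only [mul_pos hd0 hqkA0, hk7, hpow1]
  have hmain : 5 * (qk^((m+2)*k+3))⁻¹ * q^(k*(m+1)) ≤ 1 := by
    have h4 : (qk^((m+2)*k+3))⁻¹ * (0.99 * q^(k*(m+1)))
        ≤ (qk^((m+2)*k+3))⁻¹ * qk^(k*(m+1)) := mul_le_mul_of_nonneg_left hc1 hd0.le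
    nlinarith only [h4, h3, hd0.le, hqA0]
  have hM1 : 5 * (qk^((m+2)*k+3))⁻¹ ≤ ((q⁻¹)^k)^m * (q⁻¹)^k := by
    have hform : ((q⁻¹)^k)^m * (q⁻¹)^k = (q^(k*(m+1)))⁻¹ := by
      rw [← pow_mul, ← pow_add, show k*m+k = k*(m+1) by ring, inv_pow]
    rw [hform]
    have hinv := mul_inv_cancel₀ (ne_of_gt hqA0)
    nlinarith only [hmain, hinv, hd0, inv_pos.2 hqA0, hqA0]
  -- d ≤ 0.1 (qk^k)⁻¹
  have hkm11 : 11 ≤ k*m+k+3 := by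
    have h4m : k ≤ k*m := Nat.le_mul_of_pos_right k (by omega)
    omega
  have hX1000 : (1000:ℝ) ≤ qk^(k*m+k+3) := by
    calc (1000:ℝ) ≤ 1.9^11 := by norm_num
      _ ≤ 1.9^(k*m+k+3) := pow_le_pow_right₀ (by norm_num) hkm11
      _ ≤ qk^(k*m+k+3) := pow_le_pow_left₀ (by norm_num) hqk19.le _
  have hpow2 : qk^k * qk^(k*m+k+3) * (qk^((m+2)*k+3))⁻¹ = 1 := by
    rw [← pow_add, show k + (k*m+k+3) = (m+2)*k+3 by ring]
    exact mul_inv_cancel₀ (by positivity)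
  have hdk : (qk^((m+2)*k+3))⁻¹ * qk^k ≤ 1/1000 := by
    nlinarith only [mul_pos hd0 (pow_pos hqkpos k), hX1000, hpow2]
  have hqkk0 : (0:ℝ) < qk^k := pow_pos hqkpos k
  have hd_inv : (qk^((m+2)*k+3))⁻¹ ≤ 0.1 * (qk^k)⁻¹ := by
    have hin : qk^k * (qk^k)⁻¹ = 1 := mul_inv_cancel₀ (ne_of_gt hqkk0)
    nlinarith only [hdk, hin, hd0, inv_pos.2 hqkk0, hqkk0]
  -- 2 - q bounds
  have h2q105 : 2 - q ≤ 1.15 * (q⁻¹)^k := by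
    have hik := inv_le_helper (q^k) (qk^k) (by positivity) (hconv k (by omega)).1
    have h1 : 2 - q ≤ (qk^k)⁻¹ + (qk^((m+2)*k+3))⁻¹ := by
      have h2 : 2 - q = (2 - qk) + (qk - q) := by ring
      rw [h2, ← h2qk]; linarith [habs.1]
    have h4 : (0:ℝ) < (qk^k)⁻¹ := inv_pos.2 hqkk0
    rw [hSinv]
    linarith [hik, hd_inv]
  have h2qlb : 0.9 * (qk^k)⁻¹ ≤ 2 - q := by
    have h1 : (qk^k)⁻¹ - (qk^((m+2)*k+3))⁻¹ ≤ 2 - q := by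
      have h2 : 2 - q = (2 - qk) + (qk - q) := by ring
      rw [h2, ← h2qk]; linarith [habs.2]
    linarith [hd_inv]
  -- M2
  have hM2 : 5 * (qk^((m+2)*k+3))⁻¹ ≤ ((q⁻¹)^k)^m * (2 - q) := by
    have hBle : k*m ≤ (m+2)*k+3 := by
      have hb1 : k*m + 2*k+3 = (m+2)*k+3 := by ring
      omega
    have hBc := (hconv (k*m) hBle).1
    have hpow3 : qk^(k*m+k) * qk^(k+3) * (qk^((m+2)*k+3))⁻¹ = 1 := by
      rw [← pow_add, show k*m+k + (k+3) = (m+2)*k+3 by ring]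
      exact mul_inv_cancel₀ (by positivity)
    have h7 : (qk^((m+2)*k+3))⁻¹ * qk^(k*m+k) ≤ 1/89 := by
      nlinarith only [mul_pos hd0 (pow_pos hqkpos (k*m+k)), hk7, hpow3]
    have hqB0 : (0:ℝ) < q^(k*m) := by positivity
    have hstep : 5 * (qk^((m+2)*k+3))⁻¹ * q^(k*m) * qk^k ≤ 0.9 := by
      have hx1 : (qk^((m+2)*k+3))⁻¹ * (0.99 * q^(k*m))
          ≤ (qk^((m+2)*k+3))⁻¹ * qk^(k*m) := mul_le_mul_of_nonneg_left hBc hd0.le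
      have hpadd : qk^(k*m) * qk^k = qk^(k*m+k) := (pow_add qk (k*m) k).symm
      nlinarith only [hx1, h7, hqkk0, hqB0, hd0, hpadd,
        mul_le_mul_of_nonneg_right hx1 hqkk0.le]
    have hform2 : ((q⁻¹)^k)^m = (q^(k*m))⁻¹ := by rw [← pow_mul, inv_pow]
    rw [hform2]
    have hinv2 : q^(k*m) * (q^(k*m))⁻¹ = 1 := mul_inv_cancel₀ (ne_of_gt hqB0)
    have h2q0 : (0:ℝ) < 2 - q := by linarith
    -- 5d q^{km} ≤ 0.9 (qk^k)⁻¹ ≤ 2-q  then divide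
    have hstep2 : 5 * (qk^((m+2)*k+3))⁻¹ * q^(k*m) ≤ 2 - q := by
      have hin : qk^k * (qk^k)⁻¹ = 1 := mul_inv_cancel₀ (ne_of_gt hqkk0)
      nlinarith only [hstep, h2qlb, hin, inv_pos.2 hqkk0, hqkk0]
    nlinarith only [hstep2, hinv2, inv_pos.2 hqB0, hqB0, hd0]
  -- closed forms
  have hgi := gMap_iter q hq0 k (by omega)
  have hLf : ∀ i, L i = ((q⁻¹)^k)^i
      + (∑ i ∈ Finset.range (k-1), (q⁻¹)^(i+1)) * ∑ j ∈ Finset.range i, ((q⁻¹)^k)^j := by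
    intro i; rw [hL i, hgi i 1, one_mul]
  have hLQf : LQ = piQ q (seqH k) * ((q⁻¹)^k)^m
      + (∑ i ∈ Finset.range (k-1), (q⁻¹)^(i+1)) * ∑ j ∈ Finset.range m, ((q⁻¹)^k)^j := by
    rw [hLQ, hgi]
  have hRQf : RQ = (1/(q-1)) * ((q⁻¹)^k)^m
      + (∑ i ∈ Finset.range (k-1), (q⁻¹)^(i+1)) * ∑ j ∈ Finset.range m, ((q⁻¹)^k)^j := by
    rw [hRQ, hgi]
  have hRf : ∀ i, i ≤ m → R i = ((q⁻¹)^k)^i + ((q⁻¹)^k)^m * piQ q (seqG k)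
      + (∑ i ∈ Finset.range (k-1), (q⁻¹)^(i+1)) * ∑ j ∈ Finset.range i, ((q⁻¹)^k)^j := by
    intro i hi
    rw [hR i, hgi]
    have hz : q ^ (-(((m:ℤ) - (i:ℤ)) * (k:ℤ))) = (q⁻¹)^((m-i)*k) := by
      rw [show (-(((m:ℤ) - (i:ℤ)) * (k:ℤ))) = -((((m-i)*k : ℕ)):ℤ) by
          push_cast [Nat.cast_sub hi]; ring,
        zpow_neg, zpow_natCast, inv_pow]
    rw [hz]
    have hz2 : (q⁻¹)^((m-i)*k) * ((q⁻¹)^k)^i = ((q⁻¹)^k)^m := by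
      rw [← pow_mul, ← pow_add, ← pow_mul]
      congr 1
      have h' : m - i + i = m := Nat.sub_add_cancel hi
      calc (m-i)*k + k*i = ((m-i) + i)*k := by ring
        _ = m * k := by rw [h']
        _ = k * m := by ring
    linear_combination (piQ q (seqG k)) * hz2
  -- geometric sum facts
  have hgeo : (∑ j ∈ Finset.range m, ((q⁻¹)^k)^j) * (1 - (q⁻¹)^k) = 1 - ((q⁻¹)^k)^m := by
    linear_combination (-1:ℝ) * geom_sum_mul ((q⁻¹)^k) m
  have hgeo_nn : (0:ℝ) ≤ ∑ j ∈ Finset.range m, ((q⁻¹)^k)^j :=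
    Finset.sum_nonneg fun j _ => by positivity
  have hSm0 : (0:ℝ) < ((q⁻¹)^k)^m := by positivity
  have hSmle : ((q⁻¹)^k)^m ≤ 1 := pow_le_one₀ hS0.le (by linarith only [hS01])
  have hgeo12 : (∑ j ∈ Finset.range m, ((q⁻¹)^k)^j) ≤ 1.12 := by
    nlinarith only [hgeo, hSm0, hgeo_nn, hS01,
      mul_nonneg hgeo_nn (by linarith only [hS01] : (0:ℝ) ≤ 0.1 - (q⁻¹)^k)]
  -- tsum estimates
  have hH01 : ∀ j, 0 ≤ seqH k j ∧ seqH k j ≤ 1 := by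
    intro j; unfold seqH; split_ifs <;> norm_num
  have hG01 : ∀ j, 0 ≤ seqG k j ∧ seqG k j ≤ 1 := by
    intro j; unfold seqG; split_ifs <;> norm_num
  have hgeosum : Summable (fun j : ℕ => (q⁻¹)^(j+1)) := by
    have h := summable_geometric_of_lt_one ht0.le htlt1
    exact (h.mul_left q⁻¹).congr (fun i => (pow_succ' q⁻¹ i).symm)
  have hFle : ∀ j, seqH k j / q^(j+1) ≤ (q⁻¹)^(j+1) := by
    intro j
    rw [div_le_iff₀ (by positivity), inv_pow,
      inv_mul_cancel₀ (ne_of_gt (by positivity : (0:ℝ) < q^(j+1)))]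
    exact (hH01 j).2
  have hF0 : ∀ j, 0 ≤ seqH k j / q^(j+1) := fun j => div_nonneg (hH01 j).1 (by positivity)
  have hFsum : Summable (fun j => seqH k j / q^(j+1)) :=
    Summable.of_nonneg_of_le hF0 hFle hgeosum
  have hGle : ∀ j, seqG k j / q^(j+1) ≤ (q⁻¹)^(j+1) := by
    intro j
    rw [div_le_iff₀ (by positivity), inv_pow,
      inv_mul_cancel₀ (ne_of_gt (by positivity : (0:ℝ) < q^(j+1)))]
    exact (hG01 j).2
  have hG0 : ∀ j, 0 ≤ seqG k j / q^(j+1) := fun j => div_nonneg (hG01 j).1 (by positivity)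
  have hGsum : Summable (fun j => seqG k j / q^(j+1)) :=
    Summable.of_nonneg_of_le hG0 hGle hgeosum
  -- upper bound for H
  have hHsplit := Summable.sum_add_tsum_nat_add (f := fun j => seqH k j / q^(j+1)) (2*k-3) hFsum
  have hfin : ∑ j ∈ Finset.range (2*k-3), seqH k j / q^(j+1)
      ≤ ∑ j ∈ Finset.range (k-2), (q⁻¹)^(j+1) := by
    have h1 : ∀ j ∈ Finset.range (2*k-3),
        seqH k j / q^(j+1) ≤ (if j < k-2 then (q⁻¹)^(j+1) else 0) := by
      intro j hj
      by_cases hj2 : j < k-2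
      · rw [if_pos hj2]; exact hFle j
      · rw [if_neg hj2]
        have hj3 := Finset.mem_range.1 hj
        have hz : seqH k j = 0 := by
          unfold seqH
          rw [if_neg (by omega), if_neg]
          rw [Nat.mod_eq_of_lt (by omega)]
          omega
        rw [hz, zero_div]
    have h2 : ∑ j ∈ Finset.range (2*k-3), (if j < k-2 then (q⁻¹)^(j+1) else 0)
        = ∑ j ∈ Finset.range (k-2), (q⁻¹)^(j+1) := by
      calc ∑ j ∈ Finset.range (2*k-3), (if j < k-2 then (q⁻¹)^(j+1) else 0)
          = ∑ j ∈ Finset.range (k-2), (if j < k-2 then (q⁻¹)^(j+1) else 0) :=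
            (Finset.sum_subset (Finset.range_subset_range.2 (by omega))
              (fun x _ hx => if_neg (by simpa using hx))).symm
        _ = ∑ j ∈ Finset.range (k-2), (q⁻¹)^(j+1) :=
            Finset.sum_congr rfl (fun j hj => if_pos (Finset.mem_range.1 hj))
    calc ∑ j ∈ Finset.range (2*k-3), seqH k j / q^(j+1)
        ≤ ∑ j ∈ Finset.range (2*k-3), (if j < k-2 then (q⁻¹)^(j+1) else 0) :=
          Finset.sum_le_sum h1
      _ = ∑ j ∈ Finset.range (k-2), (q⁻¹)^(j+1) := h2
  have htailsum : Summable (fun n : ℕ => seqH k (n + (2*k-3)) / q^((n + (2*k-3))+1)) :=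
    (summable_nat_add_iff _).2 hFsum
  have htail2 : Summable (fun n : ℕ => (q⁻¹)^(2*k-2) * (q⁻¹)^n) :=
    (summable_geometric_of_lt_one ht0.le htlt1).mul_left _
  have htail : (∑' n : ℕ, seqH k (n + (2*k-3)) / q^((n + (2*k-3))+1))
      ≤ (q⁻¹)^(2*k-2) * (1 - q⁻¹)⁻¹ := by
    have hle : ∀ n, seqH k (n + (2*k-3)) / q^((n + (2*k-3))+1)
        ≤ (q⁻¹)^(2*k-2) * (q⁻¹)^n := by
      intro n
      calc seqH k (n + (2*k-3)) / q^((n + (2*k-3))+1) ≤ (q⁻¹)^((n + (2*k-3))+1) := hFle _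
        _ = (q⁻¹)^(2*k-2) * (q⁻¹)^n := by
          rw [← pow_add]; congr 1; omega
    calc (∑' n : ℕ, seqH k (n + (2*k-3)) / q^((n + (2*k-3))+1))
        ≤ ∑' n : ℕ, (q⁻¹)^(2*k-2) * (q⁻¹)^n := Summable.tsum_le_tsum hle htailsum htail2
      _ = (q⁻¹)^(2*k-2) * (1 - q⁻¹)⁻¹ := by
        rw [tsum_mul_left, tsum_geometric_of_lt_one ht0.le htlt1]
  have h1t : (0:ℝ) < 1 - q⁻¹ := by linarith only [ht56]
  have hw : (1 - q⁻¹)⁻¹ * (1 - q⁻¹) = 1 := inv_mul_cancel₀ (ne_of_gt h1t)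
  have hHA : piQ q (seqH k) ≤ 1 - (q⁻¹)^k := by
    have hSpre : (∑ j ∈ Finset.range (k-2), (q⁻¹)^(j+1)) * (1 - q⁻¹)
        = q⁻¹ - (q⁻¹)^(k-1) := by
      have h1 := presum q (k-2); rw [show k-2+1 = k-1 by omega] at h1; exact h1
    have h12t : 1 - 2*q⁻¹ = -((2-q) * q⁻¹) := by linear_combination (-1:ℝ) * htq
    have h2q105' : 2 - q ≤ 1.15 * ((q⁻¹)^(k-1) * q⁻¹) := by rw [← htk]; exact h2q105
    have hx : (2-q)*q⁻¹ ≤ 1.15 * ((q⁻¹)^(k-1) * q⁻¹) * q⁻¹ :=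
      mul_le_mul_of_nonneg_right h2q105' ht0.le
    have hfact : (0:ℝ) ≤ 1 - q⁻¹ - 0.15*(q⁻¹*q⁻¹) - (q⁻¹)^(k-1) := by
      nlinarith only [ht56, hu18, mul_nonneg ht0.le (sub_nonneg.2 ht56)]
    have hpoly : q⁻¹ - (q⁻¹)^(k-1) + ((q⁻¹)^(k-1))^2
        ≤ (1 - (q⁻¹)^(k-1)*q⁻¹) * (1-q⁻¹) := by
      nlinarith only [h12t, hx, mul_nonneg hu0.le hfact]
    have h5 : (∑ j ∈ Finset.range (k-2), (q⁻¹)^(j+1) + ((q⁻¹)^(k-1))^2 * (1 - q⁻¹)⁻¹)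
        * (1-q⁻¹) = q⁻¹ - (q⁻¹)^(k-1) + ((q⁻¹)^(k-1))^2 := by
      rw [add_mul, hSpre, mul_assoc, hw, mul_one]
    have h6 : (∑ j ∈ Finset.range (k-2), (q⁻¹)^(j+1) + ((q⁻¹)^(k-1))^2 * (1 - q⁻¹)⁻¹)
        * (1-q⁻¹) ≤ (1 - (q⁻¹)^(k-1)*q⁻¹) * (1-q⁻¹) := by rw [h5]; exact hpoly
    have h7 := le_of_mul_le_mul_right h6 h1t
    have hHv : piQ q (seqH k) = ∑ j ∈ Finset.range (2*k-3), seqH k j / q^(j+1)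
        + ∑' n : ℕ, seqH k (n + (2*k-3)) / q^((n + (2*k-3))+1) := by
      rw [piQ]; exact hHsplit.symm
    rw [htk]
    calc piQ q (seqH k) ≤ ∑ j ∈ Finset.range (k-2), (q⁻¹)^(j+1)
          + (q⁻¹)^(2*k-2) * (1 - q⁻¹)⁻¹ := by rw [hHv]; exact add_le_add hfin htail
      _ ≤ 1 - (q⁻¹)^(k-1) * q⁻¹ := by rw [h2k2] at *; exact h7
  -- lower bound for G
  have hGv_lb : (q⁻¹)^(k-1) + (q⁻¹)^k ≤ piQ q (seqG k) := by
    have hpair := Summable.sum_le_tsum ({k-2, k-1} : Finset ℕ)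
      (fun j _ => hG0 j) hGsum
    rw [Finset.sum_pair (by omega : k-2 ≠ k-1)] at hpair
    have e1 : seqG k (k-2) = 1 := by
      unfold seqG
      rw [if_neg (by omega), if_neg]
      rw [show (k-2) - (k-3) = 1 by omega, Nat.mod_eq_of_lt (by omega)]
      omega
    have e2 : seqG k (k-1) = 1 := by
      unfold seqG
      rw [if_neg (by omega), if_neg]
      rw [show (k-1) - (k-3) = 2 by omega, Nat.mod_eq_of_lt (by omega)]
      omega
    rw [e1, e2] at hpair
    have e3 : (1:ℝ)/q^(k-2+1) = (q⁻¹)^(k-1) := by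
      rw [one_div, ← inv_pow]; congr 1; omega
    have e4 : (1:ℝ)/q^(k-1+1) = (q⁻¹)^k := by
      rw [one_div, ← inv_pow]; congr 1; omega
    rw [e3, e4] at hpair
    rw [piQ]
    exact hpair
  have hHB : 1/(q-1) - 1 + (q⁻¹)^k ≤ piQ q (seqG k) := by
    have hq1ne : q - 1 ≠ 0 := by intro h; rw [sub_eq_zero] at h; exact absurd h.symm (ne_of_lt hq1)
    have h1 : 1/(q-1) - 1 = (2-q)/(q-1) := by field_simp; ring
    have h2 : (2-q)/(q-1) ≤ (q⁻¹)^(k-1) := by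
      rw [div_le_iff₀ (by linarith only [hq1] : (0:ℝ) < q - 1)]
      have h3 : 2 - q ≤ 1.15 * ((q⁻¹)^(k-1) * q⁻¹) := by rw [← htk]; exact h2q105
      nlinarith only [h3, hu0, ht56, hq18,
        mul_nonneg hu0.le (by linarith only [hq18] : (0:ℝ) ≤ q - 1.8),
        mul_nonneg hu0.le (by linarith only [ht56] : (0:ℝ) ≤ 0.56 - q⁻¹)]
    linarith only [hGv_lb, h1, h2]
  -- final assembly
  have hcg : (∑ i ∈ Finset.range (k-1), (q⁻¹)^(i+1)) * (∑ j ∈ Finset.range m, ((q⁻¹)^k)^j)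
      = 1 - ((q⁻¹)^k)^m
        + ((∑ i ∈ Finset.range (k-1), (q⁻¹)^(i+1)) + (q⁻¹)^k - 1)
          * (∑ j ∈ Finset.range m, ((q⁻¹)^k)^j) := by
    linear_combination hgeo
  have hq1div : (1:ℝ) < 1/(q-1) := by
    rw [lt_div_iff₀ (by linarith only [hq1] : (0:ℝ) < q-1)]; linarith only [hq2]
  refine ⟨?_, ?_, ?_⟩
  · -- case q < qk
    intro hlt
    have hdq : |q - qk| = qk - q := by
      rw [abs_of_neg (by linarith only [hlt] : q - qk < 0)]; ring
    have hEa := abs_le.1 hE2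
    rw [hdq] at hEa
    have hEpos : 0 < 2 - q - (q⁻¹)^k := by
      linarith only [hEdiff, hEa.1, (by linarith only [hlt] : (0:ℝ) < qk - q)]
    have hepos : 0 < (∑ i ∈ Finset.range (k-1), (q⁻¹)^(i+1)) + (q⁻¹)^k - 1 := by
      nlinarith only [he, hEpos, hq1]
    have heub : (∑ i ∈ Finset.range (k-1), (q⁻¹)^(i+1)) + (q⁻¹)^k - 1
        ≤ 2*(qk^((m+2)*k+3))⁻¹ := le_trans (le_abs_self _) heabs
    have hprod : ((∑ i ∈ Finset.range (k-1), (q⁻¹)^(i+1)) + (q⁻¹)^k - 1)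
        * (∑ j ∈ Finset.range m, ((q⁻¹)^k)^j) ≤ 2.24 * (qk^((m+2)*k+3))⁻¹ := by
      have h1 : ((∑ i ∈ Finset.range (k-1), (q⁻¹)^(i+1)) + (q⁻¹)^k - 1)
          * (∑ j ∈ Finset.range m, ((q⁻¹)^k)^j)
          ≤ (2*(qk^((m+2)*k+3))⁻¹) * (∑ j ∈ Finset.range m, ((q⁻¹)^k)^j) :=
        mul_le_mul_of_nonneg_right heub hgeo_nn
      have h2 := mul_le_mul_of_nonneg_left hgeo12
        (by positivity : (0:ℝ) ≤ 2*(qk^((m+2)*k+3))⁻¹)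
      nlinarith only [h1, h2]
    refine ⟨?_, ?_, ?_, ?_, ?_⟩
    · rw [hLQf, hLf 0]
      simp only [pow_zero, Finset.range_zero, Finset.sum_empty, mul_zero, add_zero]
      have h2' : ((q⁻¹)^k)^m * (q⁻¹)^k ≤ ((q⁻¹)^k)^m * (1 - piQ q (seqH k)) :=
        mul_le_mul_of_nonneg_left (by linarith only [hHA]) hSm0.le
      nlinarith only [hcg, hprod, hM1, hd0, h2']
    · intro i him
      rw [hLf i, hLf (i+1), Finset.sum_range_succ]
      nlinarith only [mul_pos (pow_pos hS0 i) hepos, pow_succ ((q⁻¹)^k) i]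
    · rw [hLf m, hRQf]
      nlinarith only [hSm0, hq1div]
    · rw [hRQf, hRf 0 (Nat.zero_le m)]
      simp only [pow_zero, Finset.range_zero, Finset.sum_empty, mul_zero, add_zero]
      have h2' : ((q⁻¹)^k)^m * (1/(q-1) - 1 + (q⁻¹)^k) ≤ ((q⁻¹)^k)^m * piQ q (seqG k) :=
        mul_le_mul_of_nonneg_left hHB hSm0.le
      nlinarith only [hcg, hprod, hM1, hd0, h2']
    · intro i him
      rw [hRf i (by omega), hRf (i+1) (by omega), Finset.sum_range_succ]
      nlinarith only [mul_pos (pow_pos hS0 i) hepos, pow_succ ((q⁻¹)^k) i]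
  · -- case q = qk
    intro heqq
    have hE0 : 2 - q - (q⁻¹)^k = 0 := by
      have h0 : (qk^k)⁻¹ - (q^k)⁻¹ = 0 := by rw [heqq, sub_self]
      have h0' : qk - q = 0 := by rw [heqq, sub_self]
      linarith only [hEdiff, h0, h0']
    have he0 : (∑ i ∈ Finset.range (k-1), (q⁻¹)^(i+1)) + (q⁻¹)^k - 1 = 0 := by
      rcases mul_eq_zero.1 (he.trans hE0) with h | h
      · exact h
      · exfalso; linarith only [h, hq1]
    have hez : ((∑ i ∈ Finset.range (k-1), (q⁻¹)^(i+1)) + (q⁻¹)^k - 1)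
        * (∑ j ∈ Finset.range m, ((q⁻¹)^k)^j) = 0 := by rw [he0, zero_mul]
    refine ⟨?_, ?_, ?_, ?_, ?_⟩
    · rw [hLQf, hLf 0]
      simp only [pow_zero, Finset.range_zero, Finset.sum_empty, mul_zero, add_zero]
      have h2' : ((q⁻¹)^k)^m * (q⁻¹)^k ≤ ((q⁻¹)^k)^m * (1 - piQ q (seqH k)) :=
        mul_le_mul_of_nonneg_left (by linarith only [hHA]) hSm0.le
      nlinarith only [hcg, hez, h2', mul_pos hSm0 hS0]
    · intro i him
      rw [hLf i, hLf (i+1), Finset.sum_range_succ]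
      linear_combination (-(((q⁻¹)^k)^i)) * he0
    · rw [hLf m, hRQf]
      nlinarith only [hSm0, hq1div]
    · rw [hRQf, hRf 0 (Nat.zero_le m)]
      simp only [pow_zero, Finset.range_zero, Finset.sum_empty, mul_zero, add_zero]
      have h2' : ((q⁻¹)^k)^m * (1/(q-1) - 1 + (q⁻¹)^k) ≤ ((q⁻¹)^k)^m * piQ q (seqG k) :=
        mul_le_mul_of_nonneg_left hHB hSm0.le
      nlinarith only [hcg, hez, h2', mul_pos hSm0 hS0]
    · intro i him
      rw [hRf i (by omega), hRf (i+1) (by omega), Finset.sum_range_succ]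
      linear_combination (-(((q⁻¹)^k)^i)) * he0
  · -- case qk < q
    intro hgt
    have hdq : |q - qk| = q - qk := abs_of_pos (by linarith only [hgt])
    have hEa := abs_le.1 hE2
    rw [hdq] at hEa
    have hEneg : 2 - q - (q⁻¹)^k < 0 := by
      linarith only [hEdiff, hEa.2, (by linarith only [hgt] : (0:ℝ) < q - qk)]
    have heneg : (∑ i ∈ Finset.range (k-1), (q⁻¹)^(i+1)) + (q⁻¹)^k - 1 < 0 := by
      nlinarith only [he, hEneg, hq1]
    have helb : -(2*(qk^((m+2)*k+3))⁻¹)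
        ≤ (∑ i ∈ Finset.range (k-1), (q⁻¹)^(i+1)) + (q⁻¹)^k - 1 := by
      have h := (abs_le.1 heabs).1; linarith only [h]
    have hprod : -(2.24 * (qk^((m+2)*k+3))⁻¹)
        ≤ ((∑ i ∈ Finset.range (k-1), (q⁻¹)^(i+1)) + (q⁻¹)^k - 1)
          * (∑ j ∈ Finset.range m, ((q⁻¹)^k)^j) := by
      have h1 : (-((∑ i ∈ Finset.range (k-1), (q⁻¹)^(i+1)) + (q⁻¹)^k - 1))
          * (∑ j ∈ Finset.range m, ((q⁻¹)^k)^j)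
          ≤ (2*(qk^((m+2)*k+3))⁻¹) * (∑ j ∈ Finset.range m, ((q⁻¹)^k)^j) :=
        mul_le_mul_of_nonneg_right (by linarith only [helb]) hgeo_nn
      have h2 := mul_le_mul_of_nonneg_left hgeo12
        (by positivity : (0:ℝ) ≤ 2*(qk^((m+2)*k+3))⁻¹)
      nlinarith only [h1, h2]
    refine ⟨?_, ?_, ?_, ?_, ?_⟩
    · rw [hLQf, hLf m]
      have h11 : piQ q (seqH k) < 1 := by linarith only [hHA, hS0]
      nlinarith only [h11, hSm0]
    · intro i him
      rw [hLf i, hLf (i+1), Finset.sum_range_succ]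
      nlinarith only [mul_neg_of_pos_of_neg (pow_pos hS0 i) heneg, pow_succ ((q⁻¹)^k) i]
    · rw [hLf 0, hRQf]
      simp only [pow_zero, Finset.range_zero, Finset.sum_empty, mul_zero, add_zero]
      have h31 : 2 - q ≤ 1/(q-1) - 1 := by
        have hq1ne : q - 1 ≠ 0 := sub_ne_zero.2 (ne_of_gt hq1)
        have h1 : 1/(q-1) - 1 = (2-q)/(q-1) := by field_simp; ring
        rw [h1, le_div_iff₀ (by linarith only [hq1] : (0:ℝ) < q-1)]
        nlinarith only [hq1, hq2]
      have h32 : ((q⁻¹)^k)^m * (2-q) ≤ ((q⁻¹)^k)^m * (1/(q-1) - 1) :=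
        mul_le_mul_of_nonneg_left h31 hSm0.le
      nlinarith only [hcg, hprod, hM2, hd0, h32]
    · rw [hRQf, hRf m le_rfl]
      have h41 : 1/(q-1) - 1 < piQ q (seqG k) := by linarith only [hHB, hS0]
      nlinarith only [h41, hSm0]
    · intro i him
      rw [hRf i (by omega), hRf (i+1) (by omega), Finset.sum_range_succ]
      nlinarith only [mul_neg_of_pos_of_neg (pow_pos hS0 i) heneg, pow_succ ((q⁻¹)^k) i]
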